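/- Expected-direction optimality: with V = (2/n)(wx)ᵀZ, if β is uniformly distributed on the sphere of radius l in R^d (independent of everything else), then for the acceptance event {‖V‖² < a} with P(‖V‖² < a) = 1 − α, and for any symmetric acceptance rule ρ with P(ρ=1|x) ≥ 1 − α, E_β[Var(τ̂ | x, ‖V‖² < a)] ≤ E_β[Var(τ̂ | x, ρ = 1)]. -/

import Mathlib

open MeasureTheory ProbabilityTheory

/-! ### Auxiliary lemmas -/

lemma sphere_moment {d : ℕ} (l : ℝ) (hl : 0 < l)
    (μ : Measure (EuclideanSpace ℝ (Fin d))) [IsProbabilityMeasure μ]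
    (hsupp : μ {b | ‖b‖ = l} = 1)
    (hrot : ∀ O : EuclideanSpace ℝ (Fin d) ≃ₗᵢ[ℝ] EuclideanSpace ℝ (Fin d), μ.map O = μ) :
    0 < d ∧ (∀ v : EuclideanSpace ℝ (Fin d),
      Integrable (fun b => (inner ℝ b v : ℝ) ^ 2) μ) ∧
    ∀ v : EuclideanSpace ℝ (Fin d),
      ∫ b, (inner ℝ b v : ℝ) ^ 2 ∂μ = l ^ 2 * ‖v‖ ^ 2 / d := by
  classical
  have hae : ∀ᵐ b ∂μ, ‖b‖ = l := by
    rw [ae_iff]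
    have : {b : EuclideanSpace ℝ (Fin d) | ¬ ‖b‖ = l} = {b | ‖b‖ = l}ᶜ := rfl
    rw [this, measure_compl ?_ (measure_ne_top _ _), hsupp, measure_univ]
    · simp
    · exact measurableSet_eq_fun (by fun_prop) measurable_const
  have hd : 0 < d := by
    by_contra h
    push_neg at h
    interval_cases d
    have h0 : ∀ b : EuclideanSpace ℝ (Fin 0), ‖b‖ = 0 := by
      intro b
      rw [Subsingleton.elim b 0]; simp
    have h2 : {b : EuclideanSpace ℝ (Fin 0) | ‖b‖ = l} = ∅ := by
      ext b; simp [h0 b, hl.ne]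
    rw [h2] at hsupp
    simp at hsupp
  have hcont : ∀ v : EuclideanSpace ℝ (Fin d),
      Continuous (fun b : EuclideanSpace ℝ (Fin d) => (inner ℝ b v : ℝ) ^ 2) :=
    fun v => ((continuous_id.inner continuous_const)).pow 2
  have hint : ∀ v : EuclideanSpace ℝ (Fin d),
      Integrable (fun b => (inner ℝ b v : ℝ) ^ 2) μ := by
    intro v
    refine Integrable.mono' (integrable_const (l ^ 2 * ‖v‖ ^ 2))
      ((hcont v).aestronglyMeasurable) ?_
    filter_upwards [hae] with b hb
    have h1 : |(inner ℝ b v : ℝ)| ≤ ‖b‖ * ‖v‖ := abs_real_inner_le_norm b v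
    have h2 : (inner ℝ b v : ℝ) ^ 2 ≤ (‖b‖ * ‖v‖) ^ 2 := by
      rw [← sq_abs]
      exact pow_le_pow_left₀ (abs_nonneg _) h1 2
    rw [Real.norm_eq_abs, abs_of_nonneg (sq_nonneg _)]
    calc (inner ℝ b v : ℝ) ^ 2 ≤ (‖b‖ * ‖v‖) ^ 2 := h2
    _ = l ^ 2 * ‖v‖ ^ 2 := by rw [hb]; ring
  have hQO : ∀ (O : EuclideanSpace ℝ (Fin d) ≃ₗᵢ[ℝ] EuclideanSpace ℝ (Fin d))
      (v : EuclideanSpace ℝ (Fin d)),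
      ∫ b, (inner ℝ b v : ℝ) ^ 2 ∂μ = ∫ b, (inner ℝ b (O.symm v) : ℝ) ^ 2 ∂μ := by
    intro O v
    conv_lhs => rw [← hrot O]
    rw [integral_map (by fun_prop) ((hcont v).aestronglyMeasurable)]
    congr 1
    funext b
    congr 1
    have : (inner ℝ (O b) v : ℝ) = inner ℝ (O b) (O (O.symm v)) := by simp
    rw [this, O.inner_map_map]
  have hQeq : ∀ u v : EuclideanSpace ℝ (Fin d), ‖u‖ = ‖v‖ →
      ∫ b, (inner ℝ b u : ℝ) ^ 2 ∂μ = ∫ b, (inner ℝ b v : ℝ) ^ 2 ∂μ := by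
    intro u v huv
    have := hQO (Submodule.reflection (ℝ ∙ (u - v))ᗮ) u
    rwa [Submodule.reflection_symm, Submodule.reflection_sub huv] at this
  refine ⟨hd, hint, ?_⟩
  set i0 : Fin d := ⟨0, hd⟩
  set e0 : EuclideanSpace ℝ (Fin d) := EuclideanSpace.single i0 1 with he0
  have he0norm : ‖e0‖ = 1 := by rw [he0, EuclideanSpace.norm_single]; simp
  set c : ℝ := ∫ b, (inner ℝ b e0 : ℝ) ^ 2 ∂μ with hc
  have hsum : ∑ k : Fin d, ∫ b, (inner ℝ b (EuclideanSpace.single k (1:ℝ)) : ℝ) ^ 2 ∂μ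
      = l ^ 2 := by
    rw [← integral_finset_sum _ (fun k _ => hint _)]
    have hper : ∀ b : EuclideanSpace ℝ (Fin d),
        ∑ k : Fin d, (inner ℝ b (EuclideanSpace.single k (1:ℝ)) : ℝ) ^ 2 = ‖b‖ ^ 2 := by
      intro b
      have hb : ‖b‖ ^ 2 = ∑ k, (b k) ^ 2 := by
        rw [EuclideanSpace.norm_eq, Real.sq_sqrt (by positivity)]
        congr 1; funext k; rw [Real.norm_eq_abs, sq_abs]
      rw [hb]
      congr 1; funext k
      rw [EuclideanSpace.inner_single_right]
      simp
    calc ∫ b, ∑ k : Fin d, (inner ℝ b (EuclideanSpace.single k (1:ℝ)) : ℝ) ^ 2 ∂μ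
        = ∫ b, ‖b‖ ^ 2 ∂μ := by congr 1; funext b; rw [hper b]
      _ = ∫ _b, l ^ 2 ∂μ := by
          apply integral_congr_ae
          filter_upwards [hae] with b hb
          rw [hb]
      _ = l ^ 2 := by simp
  have hck : ∀ k : Fin d, ∫ b, (inner ℝ b (EuclideanSpace.single k (1:ℝ)) : ℝ) ^ 2 ∂μ = c := by
    intro k
    apply hQeq
    rw [EuclideanSpace.norm_single, he0norm]; simp
  have hcval : (d : ℝ) * c = l ^ 2 := by
    rw [← hsum]
    rw [Finset.sum_congr rfl (fun k _ => hck k), Finset.sum_const]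
    simp [mul_comm]
  intro v
  by_cases hv : v = 0
  · subst hv
    simp
  · have hvn : 0 < ‖v‖ := norm_pos_iff.2 hv
    have h1 : ∫ b, (inner ℝ b v : ℝ) ^ 2 ∂μ = ∫ b, (inner ℝ b ((‖v‖ : ℝ) • e0) : ℝ) ^ 2 ∂μ := by
      apply hQeq
      rw [norm_smul, he0norm]; simp [abs_of_nonneg hvn.le]
    have h2 : ∀ b : EuclideanSpace ℝ (Fin d),
        (inner ℝ b ((‖v‖ : ℝ) • e0) : ℝ) ^ 2 = ‖v‖ ^ 2 * (inner ℝ b e0 : ℝ) ^ 2 := by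
      intro b
      rw [inner_smul_right]
      ring
    rw [h1]
    calc ∫ b, (inner ℝ b ((‖v‖:ℝ) • e0) : ℝ) ^ 2 ∂μ
        = ∫ b, ‖v‖ ^ 2 * (inner ℝ b e0 : ℝ) ^ 2 ∂μ := by congr 1; funext b; rw [h2 b]
      _ = ‖v‖ ^ 2 * c := by rw [integral_const_mul]
      _ = l ^ 2 * ‖v‖ ^ 2 / d := by
          field_simp
          rw [← hcval]; ring

lemma avg_sorted_le {α : Type*} [DecidableEq α] (S Ta Tr : Finset α) (f : α → ℝ) (a : ℝ)
    (hTaS : Ta ⊆ S) (hTrS : Tr ⊆ S)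
    (hchar : ∀ z ∈ S, (z ∈ Ta ↔ f z < a))
    (hcard : Ta.card ≤ Tr.card) (hTane : Ta.Nonempty) (hTrne : Tr.Nonempty) :
    (∑ z ∈ Ta, f z) / Ta.card ≤ (∑ z ∈ Tr, f z) / Tr.card := by
  classical
  set I := Ta ∩ Tr with hI
  set A := Ta \ Tr with hA
  set R := Tr \ Ta with hR
  have hsplitTa : ∑ z ∈ I, f z + ∑ z ∈ A, f z = ∑ z ∈ Ta, f z :=
    Finset.sum_inter_add_sum_sdiff Ta Tr f
  have hsplitTr : ∑ z ∈ Tr ∩ Ta, f z + ∑ z ∈ R, f z = ∑ z ∈ Tr, f z :=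
    Finset.sum_inter_add_sum_sdiff Tr Ta f
  have hITa : Tr ∩ Ta = I := Finset.inter_comm Tr Ta
  rw [hITa] at hsplitTr
  have hcardTa : I.card + A.card = Ta.card := Finset.card_inter_add_card_sdiff Ta Tr
  have hcardTr : I.card + R.card = Tr.card := by
    rw [← hITa]; exact Finset.card_inter_add_card_sdiff Tr Ta
  have hIle : ∑ z ∈ I, f z ≤ I.card * a := by
    calc ∑ z ∈ I, f z ≤ ∑ _z ∈ I, a := by
          apply Finset.sum_le_sum
          intro z hz
          have hzTa : z ∈ Ta := (Finset.mem_inter.1 hz).1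
          exact ((hchar z (hTaS hzTa)).1 hzTa).le
      _ = I.card * a := by rw [Finset.sum_const]; simp [mul_comm]
  have hAle : ∑ z ∈ A, f z ≤ A.card * a := by
    calc ∑ z ∈ A, f z ≤ ∑ _z ∈ A, a := by
          apply Finset.sum_le_sum
          intro z hz
          have hzTa : z ∈ Ta := (Finset.mem_sdiff.1 hz).1
          exact ((hchar z (hTaS hzTa)).1 hzTa).le
      _ = A.card * a := by rw [Finset.sum_const]; simp [mul_comm]
  have hRge : (R.card : ℝ) * a ≤ ∑ z ∈ R, f z := by
    calc (R.card : ℝ) * a = ∑ _z ∈ R, a := by rw [Finset.sum_const]; simp [mul_comm]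
      _ ≤ ∑ z ∈ R, f z := by
          apply Finset.sum_le_sum
          intro z hz
          have hzTr : z ∈ Tr := (Finset.mem_sdiff.1 hz).1
          have hzS : z ∈ S := hTrS hzTr
          have hzn : z ∉ Ta := (Finset.mem_sdiff.1 hz).2
          by_contra hlt
          push_neg at hlt
          exact hzn ((hchar z hzS).2 hlt)
  have hAR : A.card ≤ R.card := by omega
  have hTapos : (0:ℝ) < Ta.card := by
    exact_mod_cast Finset.card_pos.2 hTane
  have hTrpos : (0:ℝ) < Tr.card := by
    exact_mod_cast Finset.card_pos.2 hTrne
  rw [div_le_div_iff₀ hTapos hTrpos]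
  have h1 : (Ta.card : ℝ) = I.card + A.card := by exact_mod_cast hcardTa.symm
  have h2 : (Tr.card : ℝ) = I.card + R.card := by exact_mod_cast hcardTr.symm
  have hARr : (A.card : ℝ) ≤ R.card := by exact_mod_cast hAR
  rw [← hsplitTa, ← hsplitTr, h1, h2]
  set sI := ∑ z ∈ I, f z
  set cI := (I.card : ℝ)
  set cA := (A.card : ℝ)
  set cR := (R.card : ℝ)
  have hcI : 0 ≤ cI := Nat.cast_nonneg _
  have hcA : 0 ≤ cA := Nat.cast_nonneg _
  have hcR : 0 ≤ cR := Nat.cast_nonneg _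
  nlinarith [mul_nonneg hcI (sub_nonneg.2 hARr),
    mul_le_mul_of_nonneg_right hIle (sub_nonneg.2 hARr),
    mul_le_mul_of_nonneg_right hAle (add_nonneg hcI hcR),
    mul_le_mul_of_nonneg_right hRge (add_nonneg hcI hcA),
    mul_le_mul_of_nonneg_right hIle hcR, mul_le_mul_of_nonneg_right hIle hcA]

lemma pi_eval_one {E : Type*} [MeasurableSpace E] (μ : Measure E) [IsProbabilityMeasure μ]
    {ι : Type*} [Fintype ι] [DecidableEq ι] (i : ι) (f : E → ℝ) (hf : Integrable f μ) :
    Integrable (fun x : ι → E => f (x i)) (Measure.pi fun _ => μ) ∧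
    ∫ x : ι → E, f (x i) ∂(Measure.pi fun _ => μ) = ∫ y, f y ∂μ := by
  letI : MeasureSpace E := ⟨μ⟩
  have hvol : (Measure.pi fun _ : ι => μ) = (volume : Measure (ι → E)) := rfl
  set F : ι → E → ℝ := fun j => if j = i then f else fun _ => 1 with hF
  have hFeq : ∀ x : ι → E, f (x i) = ∏ j, F j (x j) := by
    intro x
    rw [hF]
    have : ∀ j : ι, (if j = i then f else fun _ => (1:ℝ)) (x j)
        = if j = i then f (x j) else 1 := by
      intro j; split <;> rfl
    simp only [this]
    rw [Finset.prod_ite_eq' Finset.univ i (fun j => f (x j))]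
    simp
  have hFint : ∀ j, Integrable (F j) μ := by
    intro j
    rw [hF]
    by_cases h : j = i <;> simp only [h, if_true, if_false, if_pos, if_neg, ne_eq]
    · simpa using hf
    · simp [h]
  constructor
  · have := Integrable.fintype_prod (f := F) hFint
    rw [hvol]
    exact this.congr (Filter.EventuallyEq.of_eq (funext fun x => (hFeq x).symm))
  · calc ∫ x : ι → E, f (x i) ∂(Measure.pi fun _ => μ)
        = ∫ x : ι → E, ∏ j, F j (x j) := by
          rw [hvol]; congr 1; funext x; exact hFeq x
      _ = ∏ j, ∫ y, F j y := integral_fintype_prod_volume_eq_prod F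
      _ = ∫ y, f y ∂μ := by
          have : ∀ j : ι, ∫ y, F j y = if j = i then ∫ y, f y ∂μ else 1 := by
            intro j
            rw [hF]
            by_cases h : j = i
            · simp only [h, if_true]
              rfl
            · simp [h]
          simp only [this]
          rw [Finset.prod_ite_eq' Finset.univ i (fun _ => ∫ y, f y ∂μ)]
          simp

lemma pi_eval_two {E : Type*} [MeasurableSpace E] (μ : Measure E) [IsProbabilityMeasure μ]
    {ι : Type*} [Fintype ι] [DecidableEq ι] {i j : ι} (hij : i ≠ j) (f g : E → ℝ)
    (hf : Integrable f μ) (hg : Integrable g μ) :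
    Integrable (fun x : ι → E => f (x i) * g (x j)) (Measure.pi fun _ => μ) ∧
    ∫ x : ι → E, f (x i) * g (x j) ∂(Measure.pi fun _ => μ)
      = (∫ y, f y ∂μ) * ∫ y, g y ∂μ := by
  letI : MeasureSpace E := ⟨μ⟩
  have hvol : (Measure.pi fun _ : ι => μ) = (volume : Measure (ι → E)) := rfl
  set F : ι → E → ℝ := fun k => if k = i then f else if k = j then g else fun _ => 1 with hF
  have hFi : F i = f := by rw [hF]; simp
  have hFj : F j = g := by rw [hF]; simp [hij.symm]
  have hFo : ∀ k, k ≠ i → k ≠ j → F k = fun _ => (1:ℝ) := by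
    intro k h1 h2; rw [hF]; simp [h1, h2]
  have hFeq : ∀ x : ι → E, f (x i) * g (x j) = ∏ k, F k (x k) := by
    intro x
    rw [← Finset.mul_prod_erase Finset.univ (fun k => F k (x k)) (Finset.mem_univ i), hFi]
    have hjmem : j ∈ Finset.univ.erase i := Finset.mem_erase.2 ⟨hij.symm, Finset.mem_univ j⟩
    rw [← Finset.mul_prod_erase _ (fun k => F k (x k)) hjmem, hFj]
    have : ∏ k ∈ (Finset.univ.erase i).erase j, F k (x k) = 1 := by
      apply Finset.prod_eq_one
      intro k hk
      have h2 : k ≠ j := (Finset.mem_erase.1 hk).1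
      have h1 : k ≠ i := (Finset.mem_erase.1 (Finset.mem_erase.1 hk).2).1
      rw [hFo k h1 h2]
    rw [this]
    ring
  have hFint : ∀ k, Integrable (F k) μ := by
    intro k
    by_cases h1 : k = i
    · rw [h1, hFi]; exact hf
    · by_cases h2 : k = j
      · rw [h2, hFj]; exact hg
      · rw [hFo k h1 h2]; exact integrable_const 1
  constructor
  · have := Integrable.fintype_prod (f := F) hFint
    rw [hvol]
    exact this.congr (Filter.EventuallyEq.of_eq (funext fun x => (hFeq x).symm))
  · calc ∫ x : ι → E, f (x i) * g (x j) ∂(Measure.pi fun _ => μ)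
        = ∫ x : ι → E, ∏ k, F k (x k) := by
          rw [hvol]; congr 1; funext x; exact hFeq x
      _ = ∏ k, ∫ y, F k y := integral_fintype_prod_volume_eq_prod F
      _ = (∫ y, f y ∂μ) * ∫ y, g y ∂μ := by
          rw [← Finset.mul_prod_erase Finset.univ (fun k => ∫ y, F k y)
            (Finset.mem_univ i), hFi]
          have hjmem : j ∈ Finset.univ.erase i := Finset.mem_erase.2 ⟨hij.symm, Finset.mem_univ j⟩
          rw [← Finset.mul_prod_erase _ (fun k => ∫ y, F k y) hjmem, hFj]
          have : ∏ k ∈ (Finset.univ.erase i).erase j, ∫ y, F k y = 1 := by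
            apply Finset.prod_eq_one
            intro k hk
            have h2 : k ≠ j := (Finset.mem_erase.1 hk).1
            have h1 : k ≠ i := (Finset.mem_erase.1 (Finset.mem_erase.1 hk).2).1
            rw [hFo k h1 h2]
            simp
          rw [this]
          have h1 : ∫ y, f y = ∫ y, f y ∂μ := rfl
          have h2 : ∫ y, g y = ∫ y, g y ∂μ := rfl
          rw [h1, h2]; ring

def negb {n : ℕ} (z : Fin n → Bool) : Fin n → Bool := fun i => !(z i)

lemma negb_negb {n : ℕ} (z : Fin n → Bool) : negb (negb z) = z := by
  funext i; simp [negb]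

lemma negb_ne {n : ℕ} (hn : 0 < n) (z : Fin n → Bool) : negb z ≠ z := by
  intro h
  have := congrFun h ⟨0, hn⟩
  simp [negb] at this

lemma sum_negb_eq_zero {n : ℕ} (hn : 0 < n) (T : Finset (Fin n → Bool))
    (hT : ∀ z ∈ T, negb z ∈ T) (F : (Fin n → Bool) → ℝ)
    (hF : ∀ z, F (negb z) = -F z) : ∑ z ∈ T, F z = 0 := by
  apply Finset.sum_involution (fun z _ => negb z)
  · intro z _; rw [hF]; ring
  · intro z _ _; exact negb_ne hn z
  · exact hT
  · intro z _; exact negb_negb z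
theorem stmt_19 (n d : ℕ) (hn : 0 < n) (heven : Even n)
    (x : Fin n → Fin d → ℝ) (w : Fin n → ℝ)
    (γ : Fin d → ℝ) (σ l : ℝ) (hl : 0 < l) (α a : ℝ) (hα : α ∈ Set.Ioo (0 : ℝ) 1)
    -- β uniform on the radius-l sphere: rotation-invariant, supported on the sphere
    (μβ : Measure (EuclideanSpace ℝ (Fin d))) [IsProbabilityMeasure μβ]
    (hβsupp : μβ {b | ‖b‖ = l} = 1)
    (hβrot : ∀ O : EuclideanSpace ℝ (Fin d) ≃ₗᵢ[ℝ] EuclideanSpace ℝ (Fin d),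
      μβ.map O = μβ)
    -- per-unit noise distribution for (ε₀, ε₁): mean zero, Var((ε₁+ε₀)/2) = σ²
    (μ0 : Measure (ℝ × ℝ)) [IsProbabilityMeasure μ0]
    (hi1 : Integrable (fun p : ℝ × ℝ => p.1) μ0)
    (hi2 : Integrable (fun p : ℝ × ℝ => p.2) μ0)
    (hi3 : Integrable (fun p : ℝ × ℝ => ((p.1 + p.2) / 2) ^ 2) μ0)
    (hmean0 : (∫ p, (p : ℝ × ℝ).1 ∂μ0) = 0) (hmean1 : (∫ p, (p : ℝ × ℝ).2 ∂μ0) = 0)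
    (hvar : (∫ p, (((p : ℝ × ℝ).1 + (p : ℝ × ℝ).2) / 2) ^ 2 ∂μ0) = σ ^ 2)
    (μE : Measure (Fin n → ℝ × ℝ)) (hμE : μE = Measure.pi fun _ : Fin n => μ0)
    -- balanced sign vectors
    (S : Finset (Fin n → Bool))
    (hS : S = Finset.univ.filter fun z : Fin n → Bool =>
      (Finset.univ.filter fun i => z i).card = n / 2)
    (sgn : (Fin n → Bool) → Fin n → ℝ)
    (hsgn : ∀ z i, sgn z i = if z i then 1 else -1)
    (V : (Fin n → Bool) → Fin d → ℝ)
    (hV : ∀ z k, V z k = (2 / (n : ℝ)) * ∑ i, w i * x i k * sgn z i)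
    -- Target-Balance-style acceptance: ‖V‖² < a, of probability exactly 1 - α
    (Ta : Finset (Fin n → Bool))
    (hTa : ∀ z, z ∈ Ta ↔ z ∈ S ∧ (∑ k, (V z k) ^ 2) < a)
    (hTafrac : (Ta.card : ℝ) / S.card = 1 - α)
    (hTane : Ta.Nonempty)
    -- competing symmetric acceptance rule of probability at least 1 - α
    (ρ : (Fin n → Bool) → Bool)
    (hsym : ∀ z, ρ z = ρ (fun i => !(z i)))
    (Tρ : Finset (Fin n → Bool))
    (hTρ : Tρ = S.filter fun z => ρ z = true)
    (hTρfrac : (1 : ℝ) - α ≤ (Tρ.card : ℝ) / S.card)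
    (hTρne : Tρ.Nonempty)
    -- linear outcomes: β₁ = β + γ, β₀ = β - γ, so (β₁+β₀)/2 = β
    (τ : EuclideanSpace ℝ (Fin d) → (Fin n → ℝ × ℝ) → (Fin n → Bool) → ℝ)
    (hτ : ∀ β e z, τ β e z = (2 / (n : ℝ)) *
      ∑ i, (if z i then w i * ((∑ k, (β k + γ k) * x i k) + (e i).2)
                   else -(w i * ((∑ k, (β k - γ k) * x i k) + (e i).1))))
    -- conditional variance over noise and accepted assignment, as a function of β
    (VarC : EuclideanSpace ℝ (Fin d) → Finset (Fin n → Bool) → ℝ)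
    (hVarC : ∀ β T', VarC β T' =
      ∫ e, (∑ z ∈ T',
        (τ β e z - ∫ e', (∑ z' ∈ T', τ β e' z') / T'.card ∂μE) ^ 2) / T'.card ∂μE)
    (hinta : Integrable (fun β => VarC β Ta) μβ)
    (hintρ : Integrable (fun β => VarC β Tρ) μβ) :
    ∫ β, VarC β Ta ∂μβ ≤ ∫ β, VarC β Tρ ∂μβ := by
  classical
  subst hμE
  obtain ⟨hd, hQint, hQval⟩ := sphere_moment l hl μβ hβsupp hβrot
  set μpi : Measure (Fin n → ℝ × ℝ) := Measure.pi fun _ : Fin n => μ0 with hμpi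
  -- sign facts
  have hsgnneg : ∀ z i, sgn (negb z) i = - sgn z i := by
    intro z i
    rw [hsgn, hsgn]
    by_cases h : z i <;> simp [negb, h]
  have hsgnsq : ∀ z i, sgn z i * sgn z i = 1 := by
    intro z i
    rw [hsgn]
    by_cases h : z i <;> simp [h]
  have hVneg : ∀ z k, V (negb z) k = - V z k := by
    intro z k
    rw [hV, hV]
    have : ∀ i, w i * x i k * sgn (negb z) i = -(w i * x i k * sgn z i) := by
      intro i; rw [hsgnneg]; ring
    rw [Finset.sum_congr rfl (fun i _ => this i), Finset.sum_neg_distrib]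
    ring
  have hSneg : ∀ z ∈ S, negb z ∈ S := by
    intro z hz
    rw [hS, Finset.mem_filter] at hz ⊢
    refine ⟨Finset.mem_univ _, ?_⟩
    have h2 : 2 ∣ n := heven.two_dvd
    have hsplit : (Finset.univ.filter fun i => z i = true).card
        + (Finset.univ.filter fun i => ¬ (z i = true)).card = n := by
      rw [Finset.card_filter_add_card_filter_not]
      simp
    have hneg : (Finset.univ.filter fun i => (negb z) i = (true:Bool)) =
        (Finset.univ.filter fun i => ¬ (z i = true)) := by
      apply Finset.filter_congr
      intro i _
      simp [negb]
    rw [hneg]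
    have := hz.2
    omega
  have hTaneg : ∀ z ∈ Ta, negb z ∈ Ta := by
    intro z hz
    rw [hTa] at hz ⊢
    refine ⟨hSneg z hz.1, ?_⟩
    have hsq : ∀ k : Fin d, (V (negb z) k) ^ 2 = (V z k) ^ 2 := by
      intro k; rw [hVneg]; ring
    rw [Finset.sum_congr rfl fun k _ => hsq k]
    exact hz.2
  have hTρS : Tρ ⊆ S := by rw [hTρ]; exact Finset.filter_subset _ _
  have hTρneg : ∀ z ∈ Tρ, negb z ∈ Tρ := by
    intro z hz
    rw [hTρ, Finset.mem_filter] at hz ⊢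
    refine ⟨hSneg z hz.1, ?_⟩
    show ρ (fun i => !(z i)) = true
    rw [← hsym z]
    exact hz.2
  -- decomposition of τ
  obtain ⟨A, hA⟩ : ∃ A : EuclideanSpace ℝ (Fin d) → (Fin n → Bool) → ℝ,
      ∀ β z, A β z = ∑ k, β k * V z k := ⟨_, fun _ _ => rfl⟩
  obtain ⟨B, hB⟩ : ∃ B : (Fin n → ℝ × ℝ) → (Fin n → Bool) → ℝ,
      ∀ e z, B e z = (2 / (n : ℝ)) * ∑ i, sgn z i * w i * (((e i).1 + (e i).2) / 2) :=
    ⟨_, fun _ _ => rfl⟩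
  obtain ⟨H, hH⟩ : ∃ H : (Fin n → ℝ × ℝ) → ℝ,
      ∀ e, H e = (2 / (n : ℝ)) * ∑ i, w i * (((e i).2 - (e i).1) / 2) := ⟨_, fun _ => rfl⟩
  set C : ℝ := (2 / (n : ℝ)) * ∑ i, w i * ∑ k, γ k * x i k with hC
  have hAalt : ∀ β z, A β z = (2 / (n : ℝ)) * ∑ i, sgn z i * w i * ∑ k, β k * x i k := by
    intro β z
    rw [hA]
    have h1 : ∀ k, β k * V z k = (2 / (n:ℝ)) * ∑ i, sgn z i * w i * (β k * x i k) := by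
      intro k
      rw [hV, Finset.mul_sum, Finset.mul_sum, Finset.mul_sum]
      apply Finset.sum_congr rfl
      intro i _
      ring
    rw [Finset.sum_congr rfl (fun k _ => h1 k), ← Finset.mul_sum]
    congr 1
    rw [Finset.sum_comm]
    apply Finset.sum_congr rfl
    intro i _
    rw [Finset.mul_sum]
  have hτd : ∀ β e z, τ β e z = A β z + C + (B e z + H e) := by
    intro β e z
    rw [hτ, hAalt, hB, hH, hC]
    rw [← mul_add, ← mul_add, ← mul_add, ← Finset.sum_add_distrib, ← Finset.sum_add_distrib,
      ← Finset.sum_add_distrib]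
    congr 1
    apply Finset.sum_congr rfl
    intro i _
    have hβγ1 : ∑ k, (β k + γ k) * x i k = (∑ k, β k * x i k) + ∑ k, γ k * x i k := by
      rw [← Finset.sum_add_distrib]
      apply Finset.sum_congr rfl; intro k _; ring
    have hβγ2 : ∑ k, (β k - γ k) * x i k = (∑ k, β k * x i k) - ∑ k, γ k * x i k := by
      rw [← Finset.sum_sub_distrib]
      apply Finset.sum_congr rfl; intro k _; ring
    by_cases h : z i = true
    · rw [if_pos h, hsgn, if_pos h, hβγ1]
      ring
    · rw [if_neg h, hsgn, if_neg h, hβγ2]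
      ring
  have hAneg : ∀ β z, A β (negb z) = - A β z := by
    intro β z
    rw [hA, hA]
    have : ∀ k, β k * V (negb z) k = -(β k * V z k) := by
      intro k; rw [hVneg]; ring
    rw [Finset.sum_congr rfl fun k _ => this k, Finset.sum_neg_distrib]
  have hBneg : ∀ e z, B e (negb z) = - B e z := by
    intro e z
    rw [hB, hB]
    have : ∀ i, sgn (negb z) i * w i * (((e i).1 + (e i).2) / 2)
        = -(sgn z i * w i * (((e i).1 + (e i).2) / 2)) := by
      intro i; rw [hsgnneg]; ring
    rw [Finset.sum_congr rfl fun i _ => this i, Finset.sum_neg_distrib]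
    ring
  -- noise-coordinate facts
  set mf : ℝ × ℝ → ℝ := fun p => (p.1 + p.2) / 2 with hmf
  set hf : ℝ × ℝ → ℝ := fun p => (p.2 - p.1) / 2 with hhf
  set K : ℝ := (2 / (n : ℝ)) ^ 2 * σ ^ 2 * ∑ i, w i ^ 2 with hK
  have hmint : Integrable mf μ0 := (hi1.add hi2).div_const 2
  have hmmean : ∫ p, mf p ∂μ0 = 0 := by
    rw [hmf]
    simp only [div_eq_mul_inv]
    rw [integral_mul_const, integral_add hi1 hi2, hmean0, hmean1]
    ring
  have hfint : Integrable hf μ0 := (hi2.sub hi1).div_const 2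
  have hfmean : ∫ p, hf p ∂μ0 = 0 := by
    rw [hhf]
    simp only [div_eq_mul_inv]
    rw [integral_mul_const, integral_sub hi2 hi1, hmean0, hmean1]
    ring
  have hm2int : Integrable (fun p => mf p * mf p) μ0 := by
    refine hi3.congr (Filter.EventuallyEq.of_eq (funext fun p => ?_))
    rw [hmf]; ring
  have hm2val : ∫ p, mf p * mf p ∂μ0 = σ ^ 2 := by
    rw [← hvar]
    congr 1; funext p; rw [hmf]; ring
  have hmm : ∀ i j : Fin n, Integrable (fun e : Fin n → ℝ × ℝ => mf (e i) * mf (e j)) μpi ∧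
      (∫ e, mf (e i) * mf (e j) ∂μpi) = if i = j then σ ^ 2 else 0 := by
    intro i j
    by_cases hij : i = j
    · subst hij
      have := pi_eval_one (ι := Fin n) μ0 i (fun p => mf p * mf p) hm2int
      exact ⟨this.1, by rw [this.2, hm2val, if_pos rfl]⟩
    · have := pi_eval_two (ι := Fin n) μ0 hij mf mf hmint hmint
      exact ⟨this.1, by rw [this.2, hmmean, if_neg hij]; ring⟩
  have hco : ∀ i : Fin n, Integrable (fun e : Fin n → ℝ × ℝ => mf (e i)) μpi ∧
      (∫ e, mf (e i) ∂μpi) = 0 := by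
    intro i
    have := pi_eval_one (ι := Fin n) μ0 i mf hmint
    exact ⟨this.1, by rw [this.2, hmmean]⟩
  have hcoh : ∀ i : Fin n, Integrable (fun e : Fin n → ℝ × ℝ => hf (e i)) μpi ∧
      (∫ e, hf (e i) ∂μpi) = 0 := by
    intro i
    have := pi_eval_one (ι := Fin n) μ0 i hf hfint
    exact ⟨this.1, by rw [this.2, hfmean]⟩
  -- H is integrable with mean zero
  have hHform : H = fun e => (2 / (n : ℝ)) * ∑ i, w i * hf (e i) := by
    funext e
    rw [hH]
  have hHint : Integrable H μpi := by
    rw [hHform]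
    exact (integrable_finset_sum _ fun i _ => ((hcoh i).1.const_mul (w i))).const_mul _
  have hHmean : ∫ e, H e ∂μpi = 0 := by
    rw [hHform, integral_const_mul, integral_finset_sum _
      (fun i _ => ((hcoh i).1.const_mul (w i)))]
    have : ∀ i : Fin n, ∫ e, w i * hf (e i) ∂μpi = 0 := by
      intro i
      rw [integral_const_mul, (hcoh i).2, mul_zero]
    rw [Finset.sum_congr rfl fun i _ => this i]
    simp
  -- (A + B)² integral computation
  set c : (Fin n → Bool) → Fin n → ℝ := fun z i => 2 / (n : ℝ) * (sgn z i * w i) with hc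
  have hBsum : ∀ e z, B e z = ∑ i, c z i * mf (e i) := by
    intro e z
    rw [hB, Finset.mul_sum]
    apply Finset.sum_congr rfl
    intro i _
    rw [hc, hmf]
    ring
  have hexp : ∀ (β : EuclideanSpace ℝ (Fin d)) z e, (A β z + B e z) ^ 2 =
      A β z ^ 2 + (∑ i, (2 * A β z * c z i) * mf (e i))
        + ∑ i, ∑ j, (c z i * c z j) * (mf (e i) * mf (e j)) := by
    intro β z e
    rw [hBsum]
    have h1 : (∑ i, c z i * mf (e i)) ^ 2
        = ∑ i, ∑ j, (c z i * c z j) * (mf (e i) * mf (e j)) := by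
      rw [sq, Finset.sum_mul_sum]
      apply Finset.sum_congr rfl; intro i _
      apply Finset.sum_congr rfl; intro j _
      ring
    have h2 : ∑ i, (2 * A β z * c z i) * mf (e i)
        = 2 * A β z * ∑ i, c z i * mf (e i) := by
      rw [Finset.mul_sum]
      apply Finset.sum_congr rfl; intro i _; ring
    rw [h2, ← h1]
    ring
  have hABint : ∀ (β : EuclideanSpace ℝ (Fin d)) z,
      Integrable (fun e => (A β z + B e z) ^ 2) μpi := by
    intro β z
    have heq : (fun e => (A β z + B e z) ^ 2) = fun e =>
        A β z ^ 2 + (∑ i, (2 * A β z * c z i) * mf (e i))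
          + ∑ i, ∑ j, (c z i * c z j) * (mf (e i) * mf (e j)) := funext fun e => hexp β z e
    rw [heq]
    refine Integrable.add (Integrable.add (integrable_const _) ?_) ?_
    · exact integrable_finset_sum _ fun i _ => ((hco i).1.const_mul _)
    · exact integrable_finset_sum _ fun i _ =>
        integrable_finset_sum _ fun j _ => ((hmm i j).1.const_mul _)
  have hABval : ∀ (β : EuclideanSpace ℝ (Fin d)) z,
      ∫ e, (A β z + B e z) ^ 2 ∂μpi = A β z ^ 2 + K := by
    intro β z
    have heq : (fun e => (A β z + B e z) ^ 2) = fun e =>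
        A β z ^ 2 + (∑ i, (2 * A β z * c z i) * mf (e i))
          + ∑ i, ∑ j, (c z i * c z j) * (mf (e i) * mf (e j)) := funext fun e => hexp β z e
    rw [heq]
    have I1 : Integrable (fun e : Fin n → ℝ × ℝ =>
        ∑ i, (2 * A β z * c z i) * mf (e i)) μpi :=
      integrable_finset_sum _ fun i _ => ((hco i).1.const_mul _)
    have I2 : Integrable (fun e : Fin n → ℝ × ℝ =>
        ∑ i, ∑ j, (c z i * c z j) * (mf (e i) * mf (e j))) μpi :=
      integrable_finset_sum _ fun i _ =>
        integrable_finset_sum _ fun j _ => ((hmm i j).1.const_mul _)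
    have I0 : Integrable (fun e : Fin n → ℝ × ℝ =>
        A β z ^ 2 + ∑ i, (2 * A β z * c z i) * mf (e i)) μpi := by
      exact (integrable_const _).add I1
    rw [integral_add I0 I2, integral_add (integrable_const _) I1]
    rw [integral_const]
    simp only [measure_univ, probReal_univ, ENNReal.toReal_one, smul_eq_mul, one_mul]
    rw [integral_finset_sum _ fun i _ => ((hco i).1.const_mul _)]
    rw [integral_finset_sum _ fun i _ =>
      integrable_finset_sum _ fun j _ => ((hmm i j).1.const_mul _)]
    have hz1 : ∑ i : Fin n, ∫ e, (2 * A β z * c z i) * mf (e i) ∂μpi = 0 := by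
      apply Finset.sum_eq_zero
      intro i _
      rw [integral_const_mul, (hco i).2, mul_zero]
    have hz2 : ∑ i : Fin n, ∫ e, ∑ j, (c z i * c z j) * (mf (e i) * mf (e j)) ∂μpi = K := by
      have hper : ∀ i : Fin n, ∫ e, ∑ j, (c z i * c z j) * (mf (e i) * mf (e j)) ∂μpi
          = (2 / (n:ℝ)) ^ 2 * σ ^ 2 * w i ^ 2 := by
        intro i
        rw [integral_finset_sum _ fun j _ => ((hmm i j).1.const_mul _)]
        have hper2 : ∀ j : Fin n, ∫ e, (c z i * c z j) * (mf (e i) * mf (e j)) ∂μpi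
            = (c z i * c z j) * if i = j then σ ^ 2 else 0 := by
          intro j
          rw [integral_const_mul, (hmm i j).2]
        rw [Finset.sum_congr rfl fun j _ => hper2 j]
        simp only [mul_ite, mul_zero]
        rw [Finset.sum_ite_eq (Finset.univ : Finset (Fin n)) i
          (fun j => c z i * c z j * σ ^ 2)]
        rw [if_pos (Finset.mem_univ i), hc]
        have hs := hsgnsq z i
        simp only []
        linear_combination ((2 / (n:ℝ)) ^ 2 * σ ^ 2 * w i ^ 2) * hs
      rw [Finset.sum_congr rfl fun i _ => hper i, hK, ← Finset.mul_sum]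
    rw [hz1, hz2]
    ring
  -- the inner-variance identity for a symmetric nonempty acceptance set
  have hVarCeq : ∀ T : Finset (Fin n → Bool), T.Nonempty → (∀ z ∈ T, negb z ∈ T) →
      ∀ β, VarC β T = ∫ e, ((∑ z ∈ T, (A β z + B e z) ^ 2) / T.card + H e ^ 2) ∂μpi := by
    intro T hTne hTneg
    have hTcard : (T.card : ℝ) ≠ 0 := by
      have := Finset.card_pos.2 hTne
      exact Nat.cast_ne_zero.2 this.ne'
    have hsumAB : ∀ β e, ∑ z ∈ T, (A β z + B e z) = 0 := by
      intro β e
      apply sum_negb_eq_zero hn T hTneg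
      intro z
      rw [hAneg, hBneg]
      ring
    have hsumτ : ∀ β e, (∑ z ∈ T, τ β e z) / T.card = C + H e := by
      intro β e
      have h1 : ∑ z ∈ T, τ β e z = ∑ z ∈ T, ((A β z + B e z) + (C + H e)) := by
        apply Finset.sum_congr rfl
        intro z _
        rw [hτd]
        ring
      rw [h1, Finset.sum_add_distrib, hsumAB, Finset.sum_const, zero_add, nsmul_eq_mul]
      field_simp
    have hmean : ∀ β, (∫ e', (∑ z' ∈ T, τ β e' z') / T.card ∂μpi) = C := by
      intro β
      have h1 : (fun e' => (∑ z' ∈ T, τ β e' z') / (T.card : ℝ))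
          = fun e' => C + H e' := funext fun e' => hsumτ β e'
      rw [h1, integral_add (integrable_const _) hHint, hHmean, integral_const]
      simp
    have hptwise : ∀ β e, (∑ z ∈ T, (τ β e z - C) ^ 2) / T.card
        = (∑ z ∈ T, (A β z + B e z) ^ 2) / T.card + H e ^ 2 := by
      intro β e
      have h1 : ∑ z ∈ T, (τ β e z - C) ^ 2
          = ∑ z ∈ T, ((A β z + B e z) ^ 2 + (2 * H e) * (A β z + B e z) + H e ^ 2) := by
        apply Finset.sum_congr rfl
        intro z _
        rw [hτd]
        ring
      rw [h1, Finset.sum_add_distrib, Finset.sum_add_distrib, ← Finset.mul_sum, hsumAB,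
        Finset.sum_const, nsmul_eq_mul, mul_zero, add_zero]
      rw [add_div, mul_div_cancel_left₀ _ hTcard]
    intro β
    rw [hVarC β T]
    rw [show (∫ e', (∑ z' ∈ T, τ β e' z') / (T.card : ℝ) ∂μpi) = C from hmean β]
    congr 1
    funext e
    exact hptwise β e
  -- the dichotomy on integrability of H²
  have hsplitT : ∀ T : Finset (Fin n → Bool), T.Nonempty → (∀ z ∈ T, negb z ∈ T) →
      (Integrable (fun e => H e ^ 2) μpi →
        ∀ β, VarC β T = (∑ z ∈ T, A β z ^ 2) / T.card + K + ∫ e, H e ^ 2 ∂μpi) ∧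
      (¬ Integrable (fun e => H e ^ 2) μpi → ∀ β, VarC β T = 0) := by
    intro T hTne hTneg
    have hTcard : (T.card : ℝ) ≠ 0 := by
      have := Finset.card_pos.2 hTne
      exact Nat.cast_ne_zero.2 this.ne'
    have hGint : ∀ β, Integrable
        (fun e => (∑ z ∈ T, (A β z + B e z) ^ 2) / T.card) μpi := by
      intro β
      exact (integrable_finset_sum _ fun z _ => hABint β z).div_const _
    have hGval : ∀ β, ∫ e, (∑ z ∈ T, (A β z + B e z) ^ 2) / T.card ∂μpi
        = (∑ z ∈ T, A β z ^ 2) / T.card + K := by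
      intro β
      rw [integral_div, integral_finset_sum _ fun z _ => hABint β z]
      rw [Finset.sum_congr rfl fun z _ => hABval β z, Finset.sum_add_distrib,
        Finset.sum_const, nsmul_eq_mul]
      rw [add_div, mul_div_cancel_left₀ _ hTcard]
    constructor
    · intro hH2 β
      rw [hVarCeq T hTne hTneg β, integral_add (hGint β) hH2, hGval β]
    · intro hH2 β
      rw [hVarCeq T hTne hTneg β]
      apply integral_undef
      intro hcon
      apply hH2
      have := (hcon.sub (hGint β))
      refine this.congr (Filter.EventuallyEq.of_eq (funext fun e => ?_))
      simp only [Pi.sub_apply]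
      ring
  -- final assembly
  by_cases hH2 : Integrable (fun e => H e ^ 2) μpi
  · -- main case
    have hposa := (hsplitT Ta hTane hTaneg).1 hH2
    have hposρ := (hsplitT Tρ hTρne hTρneg).1 hH2
    have hTaS : Ta ⊆ S := fun z hz => ((hTa z).1 hz).1
    have hScard : 0 < S.card := Finset.card_pos.2 (hTane.mono hTaS)
    have hcard : Ta.card ≤ Tρ.card := by
      have hS' : (0:ℝ) < S.card := by exact_mod_cast hScard
      have hle : (Ta.card : ℝ) / S.card ≤ (Tρ.card : ℝ) / S.card := by
        rw [hTafrac]; exact hTρfrac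
      have h2 := (div_le_div_iff_of_pos_right hS').1 hle
      exact_mod_cast h2
    set vz : (Fin n → Bool) → EuclideanSpace ℝ (Fin d) := fun z => WithLp.toLp 2 (fun k => V z k) with hvz
    have hAv : ∀ β z, A β z = (inner ℝ β (vz z) : ℝ) := by
      intro β z
      rw [hA, PiLp.inner_apply]
      apply Finset.sum_congr rfl
      intro k _
      rw [hvz]
      simp [RCLike.inner_apply, mul_comm]
    have hnorm : ∀ z, ‖vz z‖ ^ 2 = ∑ k, (V z k) ^ 2 := by
      intro z
      rw [EuclideanSpace.norm_eq, Real.sq_sqrt (by positivity)]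
      apply Finset.sum_congr rfl
      intro k _
      rw [Real.norm_eq_abs, sq_abs]
    have hΦint : ∀ T : Finset (Fin n → Bool),
        Integrable (fun β => (∑ z ∈ T, A β z ^ 2) / T.card) μβ := by
      intro T
      apply Integrable.div_const
      apply integrable_finset_sum
      intro z _
      refine (hQint (vz z)).congr (Filter.EventuallyEq.of_eq (funext fun β => ?_))
      rw [hAv β z]
    have hΦval : ∀ T : Finset (Fin n → Bool),
        ∫ β, (∑ z ∈ T, A β z ^ 2) / T.card ∂μβ
        = (l ^ 2 / d) * ((∑ z ∈ T, ∑ k, (V z k) ^ 2) / T.card) := by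
      intro T
      rw [integral_div]
      rw [integral_finset_sum]
      swap
      · intro z _
        refine (hQint (vz z)).congr (Filter.EventuallyEq.of_eq (funext fun β => ?_))
        rw [hAv β z]
      have hper : ∀ z, ∫ β, A β z ^ 2 ∂μβ = l ^ 2 * (∑ k, (V z k) ^ 2) / d := by
        intro z
        rw [show (fun β => A β z ^ 2) = fun β => (inner ℝ β (vz z) : ℝ) ^ 2 from
          funext fun β => by rw [hAv β z]]
        rw [hQval (vz z), hnorm z]
      rw [Finset.sum_congr rfl fun z _ => hper z]
      have hcc : (∑ z ∈ T, l ^ 2 * (∑ k, (V z k) ^ 2) / d)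
          = (l ^ 2 / d) * ∑ z ∈ T, ∑ k, (V z k) ^ 2 := by
        rw [Finset.mul_sum]
        apply Finset.sum_congr rfl
        intro z _
        ring
      rw [hcc, mul_div_assoc]
    have hsort : (∑ z ∈ Ta, ∑ k, (V z k) ^ 2) / Ta.card
        ≤ (∑ z ∈ Tρ, ∑ k, (V z k) ^ 2) / Tρ.card := by
      apply avg_sorted_le S Ta Tρ (fun z => ∑ k, (V z k) ^ 2) a hTaS hTρS
      · intro z hz
        constructor
        · intro h; exact ((hTa z).1 h).2
        · intro h; exact (hTa z).2 ⟨hz, h⟩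
      · exact hcard
      · exact hTane
      · exact hTρne
    have hdiff : ∫ β, VarC β Ta ∂μβ - ∫ β, VarC β Tρ ∂μβ
        = ∫ β, (∑ z ∈ Ta, A β z ^ 2) / Ta.card ∂μβ
          - ∫ β, (∑ z ∈ Tρ, A β z ^ 2) / Tρ.card ∂μβ := by
      rw [← integral_sub hinta hintρ, ← integral_sub (hΦint Ta) (hΦint Tρ)]
      congr 1
      funext β
      rw [hposa β, hposρ β]
      ring
    have hle : ∫ β, (∑ z ∈ Ta, A β z ^ 2) / Ta.card ∂μβ
        ≤ ∫ β, (∑ z ∈ Tρ, A β z ^ 2) / Tρ.card ∂μβ := by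
      rw [hΦval Ta, hΦval Tρ]
      apply mul_le_mul_of_nonneg_left hsort
      positivity
    linarith [hdiff, hle]
  · -- degenerate case: both conditional variances are (by convention) zero
    have hna := (hsplitT Ta hTane hTaneg).2 hH2
    have hnρ := (hsplitT Tρ hTρne hTρneg).2 hH2
    have h1 : ∫ β, VarC β Ta ∂μβ = 0 := by
      rw [show (fun β => VarC β Ta) = fun _ => (0:ℝ) from funext fun β => hna β]
      simp
    have h2 : ∫ β, VarC β Tρ ∂μβ = 0 := by
      rw [show (fun β => VarC β Tρ) = fun _ => (0:ℝ) from funext fun β => hnρ β]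
      simp
    rw [h1, h2]
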